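/- Let A, B be bounded operators on a complex Hilbert space H. Then for every unit vector k, |⟨(AB + B*A) k, k⟩| ≤ (1/2)·⟨(|A| + |A*|) k, k⟩ + (1/2)·⟨B*(|A| + |A*|)B k, k⟩. -/

import Mathlib

open scoped InnerProductSpace
open ContinuousLinearMap Complex

variable {H : Type*} [NormedAddCommGroup H] [InnerProductSpace ℂ H] [CompleteSpace H]

/-- `T ^ e` for a (positive) operator `T`, via the continuous functional calculus. -/
noncomputable def opow (T : H →L[ℂ] H) (e : ℝ) : H →L[ℂ] H :=
  cfc (fun t : ℝ => t ^ e) T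

/-- The absolute value `|T| = (T*T)^(1/2)` of an operator. -/
noncomputable def oabs (T : H →L[ℂ] H) : H →L[ℂ] H :=
  cfc Real.sqrt (ContinuousLinearMap.adjoint T * T)

namespace BerAux

lemma oabs_nonneg (A : H →L[ℂ] H) : 0 ≤ oabs A :=
  cfc_nonneg fun t _ => Real.sqrt_nonneg t

lemma adj_mul_self_nonneg (A : H →L[ℂ] H) :
    0 ≤ ContinuousLinearMap.adjoint A * A := by
  simpa [ContinuousLinearMap.star_eq_adjoint] using star_mul_self_nonneg A

lemma oabs_mul_self (A : H →L[ℂ] H) :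
    oabs A * oabs A = ContinuousLinearMap.adjoint A * A := by
  have hT := adj_mul_self_nonneg A
  unfold oabs
  rw [← cfc_mul ..]
  conv_rhs => rw [← cfc_id ℝ (ContinuousLinearMap.adjoint A * A)]
  exact cfc_congr fun t ht =>
    Real.mul_self_sqrt (spectrum_nonneg_of_nonneg hT ht)

lemma sq_inj (x y : H →L[ℂ] H) (hx : 0 ≤ x) (hy : 0 ≤ y) (h : x * x = y * y) :
    x = y := by
  have e : ∀ z : H →L[ℂ] H, 0 ≤ z → cfc Real.sqrt (z * z) = z := by
    intro z hz
    have hsa : IsSelfAdjoint z := IsSelfAdjoint.of_nonneg hz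
    have h1 : z * z = cfc (fun t : ℝ => t * t) z := by rw [cfc_mul .., cfc_id' ℝ z]
    rw [h1, ← cfc_comp Real.sqrt (fun t : ℝ => t * t) z]
    conv_rhs => rw [← cfc_id ℝ z]
    refine cfc_congr fun t ht => ?_
    have : 0 ≤ t := spectrum_nonneg_of_nonneg hz ht
    simp [Function.comp, Real.sqrt_mul_self this]
  rw [← e x hx, ← e y hy, h]

lemma intertwine (A : H →L[ℂ] H) :
    A * oabs A = oabs (ContinuousLinearMap.adjoint A) * A := by
  set A' := ContinuousLinearMap.adjoint A with hA'
  set P := oabs A with hPdef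
  set Q := oabs A' with hQdef
  have hP : 0 ≤ P := oabs_nonneg A
  have hQ : 0 ≤ Q := oabs_nonneg A'
  have hP2 : P * P = A' * A := oabs_mul_self A
  have hQ2 : Q * Q = A * A' := by
    simpa [hA', ContinuousLinearMap.adjoint_adjoint] using oabs_mul_self A'
  have hPsa : IsSelfAdjoint P := IsSelfAdjoint.of_nonneg hP
  have hQsa : IsSelfAdjoint Q := IsSelfAdjoint.of_nonneg hQ
  have hX : 0 ≤ A' * Q * A := by
    simpa [hA', ContinuousLinearMap.star_eq_adjoint] using star_left_conjugate_nonneg hQ A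
  have hXX : (A' * Q * A) * (A' * Q * A) = (P * P * P) * (P * P * P) := by
    calc (A' * Q * A) * (A' * Q * A)
        = A' * Q * (A * A') * Q * A := by noncomm_ring
      _ = A' * Q * (Q * Q) * Q * A := by rw [hQ2]
      _ = A' * ((Q * Q) * (Q * Q)) * A := by noncomm_ring
      _ = A' * ((A * A') * (A * A')) * A := by rw [hQ2]
      _ = (A' * A) * ((A' * A) * (A' * A)) := by noncomm_ring
      _ = (P * P) * ((P * P) * (P * P)) := by rw [hP2]
      _ = (P * P * P) * (P * P * P) := by noncomm_ring
  have hP3 : 0 ≤ P * P * P := by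
    simpa [hPsa.star_eq] using star_left_conjugate_nonneg hP P
  have hXP : A' * Q * A = P * P * P := sq_inj _ _ hX hP3 hXX
  have hN : star (A * P - Q * A) * (A * P - Q * A) = 0 := by
    have hstar : star (A * P - Q * A) = P * A' - A' * Q := by
      simp [star_sub, star_mul, hPsa.star_eq, hQsa.star_eq,
        ContinuousLinearMap.star_eq_adjoint, hA']
    rw [hstar]
    calc (P * A' - A' * Q) * (A * P - Q * A)
        = P * (A' * A) * P - P * (A' * Q * A) - (A' * Q * A) * P
            + A' * (Q * Q) * A := by noncomm_ring
      _ = P * (A' * A) * P - P * (P * P * P) - (P * P * P) * P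
            + A' * (A * A') * A := by rw [hXP, hQ2]
      _ = P * (A' * A) * P - P * (P * P * P) - (P * P * P) * P
            + (A' * A) * (A' * A) := by noncomm_ring
      _ = P * (P * P) * P - P * (P * P * P) - (P * P * P) * P
            + (P * P) * (P * P) := by rw [← hP2]
      _ = 0 := by noncomm_ring
  have h0 : A * P - Q * A = 0 := by
    rwa [CStarRing.star_mul_self_eq_zero_iff] at hN
  exact sub_eq_zero.mp h0

lemma resolvent (S : H →L[ℂ] H) (hS : 0 ≤ S) {ε : ℝ} (hε : 0 < ε) :
    ∃ R : H →L[ℂ] H, 0 ≤ R ∧ R * (S + algebraMap ℝ (H →L[ℂ] H) ε) = 1 ∧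
      (S + algebraMap ℝ (H →L[ℂ] H) ε) * R = 1 ∧ 0 ≤ S - R * (S * S) := by
  have hsa : IsSelfAdjoint S := .of_nonneg hS
  have hspec : ∀ t ∈ spectrum ℝ S, 0 ≤ t := fun t ht => spectrum_nonneg_of_nonneg hS ht
  have hcont : ContinuousOn (fun t : ℝ => (t + ε)⁻¹) (spectrum ℝ S) := by
    refine ContinuousOn.inv₀ (by fun_prop) fun t ht => ?_
    have := hspec t ht; positivity
  have hMS : S + algebraMap ℝ (H →L[ℂ] H) ε = cfc (fun t : ℝ => t + ε) S := by
    rw [cfc_add_const ε (fun t : ℝ => t) S (by fun_prop) hsa, cfc_id' ℝ S]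
  refine ⟨cfc (fun t : ℝ => (t + ε)⁻¹) S,
    cfc_nonneg fun t ht => by have := hspec t ht; positivity, ?_, ?_, ?_⟩
  · rw [hMS, ← cfc_mul _ _ S hcont (by fun_prop)]
    have h1 : cfc (fun t : ℝ => (t + ε)⁻¹ * (t + ε)) S = cfc (fun _ : ℝ => (1 : ℝ)) S :=
      cfc_congr fun t ht => inv_mul_cancel₀ (by have := hspec t ht; positivity)
    rw [h1, cfc_const 1 S hsa, map_one]
  · rw [hMS, ← cfc_mul _ _ S (by fun_prop) hcont]
    have h1 : cfc (fun t : ℝ => (t + ε) * (t + ε)⁻¹) S = cfc (fun _ : ℝ => (1 : ℝ)) S :=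
      cfc_congr fun t ht => mul_inv_cancel₀ (by have := hspec t ht; positivity)
    rw [h1, cfc_const 1 S hsa, map_one]
  · have hSS : S * S = cfc (fun t : ℝ => t * t) S := by
      rw [cfc_mul _ _ S (by fun_prop) (by fun_prop), cfc_id' ℝ S]
    have h2 : cfc (fun t : ℝ => (t + ε)⁻¹ * (t * t)) S
        = cfc (fun t : ℝ => (t + ε)⁻¹) S * (S * S) := by
      rw [hSS, ← cfc_mul _ _ S hcont (by fun_prop)]
    have h3 : S - cfc (fun t : ℝ => (t + ε)⁻¹) S * (S * S)
        = cfc (fun t : ℝ => t - (t + ε)⁻¹ * (t * t)) S := by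
      rw [cfc_sub (fun t : ℝ => t) (fun t : ℝ => (t + ε)⁻¹ * (t * t)) S (by fun_prop) (hcont.mul (by fun_prop)), h2, cfc_id' ℝ S]
    rw [h3]
    refine cfc_nonneg fun t ht => ?_
    have h := hspec t ht
    have hle : (t + ε)⁻¹ * (t * t) ≤ t := by
      rw [inv_mul_le_iff₀ (by positivity)]; nlinarith
    linarith

lemma inner_re_nonneg {X : H →L[ℂ] H} (hX : 0 ≤ X) (w : H) : 0 ≤ (⟪X w, w⟫_ℂ).re := by
  have := ((ContinuousLinearMap.nonneg_iff_isPositive X).mp hX).inner_nonneg_left w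
  simpa [ContinuousLinearMap.reApplyInnerSelf] using (Complex.nonneg_iff.mp this).1

lemma inner_re_mono {X Y : H →L[ℂ] H} (h : X ≤ Y) (w : H) :
    (⟪X w, w⟫_ℂ).re ≤ (⟪Y w, w⟫_ℂ).re := by
  have h0 : 0 ≤ Y - X := sub_nonneg.mpr h
  have := inner_re_nonneg h0 w
  rw [ContinuousLinearMap.sub_apply, inner_sub_left] at this
  simp only [Complex.sub_re] at this
  linarith

lemma inner_selfadj_swap {R : H →L[ℂ] H} (hR : IsSelfAdjoint R) (x y : H) :
    ⟪x, R y⟫_ℂ = ⟪R x, y⟫_ℂ := by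
  conv_lhs => rw [← hR.adjoint_eq]
  rw [ContinuousLinearMap.adjoint_inner_right]

lemma keyRe (A : H →L[ℂ] H) (u v : H) {ε : ℝ} (hε : 0 < ε) :
    2 * (⟪A u, v⟫_ℂ).re ≤ (⟪oabs A u, u⟫_ℂ).re + ε * ‖u‖ ^ 2
      + (⟪oabs (ContinuousLinearMap.adjoint A) v, v⟫_ℂ).re := by
  set A' := ContinuousLinearMap.adjoint A with hA'
  set P := oabs A with hPdef
  set Q := oabs A' with hQdef
  have hP : 0 ≤ P := oabs_nonneg A
  have hQ : 0 ≤ Q := oabs_nonneg A'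
  have hQ2 : Q * Q = A * A' := by
    simpa [hA', ContinuousLinearMap.adjoint_adjoint] using oabs_mul_self A'
  obtain ⟨R, hRnn, hRM, hMR, _⟩ := resolvent P hP hε
  obtain ⟨R', hR'nn, hR'M, hMR', hQres⟩ := resolvent Q hQ hε
  set c : H →L[ℂ] H := algebraMap ℝ (H →L[ℂ] H) ε with hc
  set M : H →L[ℂ] H := P + c with hM
  set M' : H →L[ℂ] H := Q + c with hM'
  have hRsa : IsSelfAdjoint R := .of_nonneg hRnn
  have hMnn : 0 ≤ M := by
    refine add_nonneg hP ?_
    have hPsa : IsSelfAdjoint P := .of_nonneg hP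
    rw [hc, ← cfc_const ε P hPsa]
    exact cfc_nonneg fun t _ => hε.le
  -- intertwining at resolvent level
  have hAM : A * M = M' * A := by
    rw [hM, hM', mul_add, add_mul, intertwine A]
    rw [hc, Algebra.commutes]
  have hAR : A * R = R' * A := by
    calc A * R = (R' * M') * (A * R) := by rw [hR'M, one_mul]
      _ = R' * ((M' * A) * R) := by noncomm_ring
      _ = R' * ((A * M) * R) := by rw [hAM]
      _ = R' * (A * (M * R)) := by noncomm_ring
      _ = R' * A := by rw [hMR, mul_one]
  -- operator inequality A R A' ≤ Q
  have hkey : A * R * A' ≤ Q := by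
    have h1 : A * R * A' = R' * (Q * Q) := by
      rw [hAR, hQ2]; noncomm_ring
    rw [h1, ← sub_nonneg]
    exact hQres
  -- vector computation
  set x : H := A' v with hx
  set w : H := u - R x with hw
  have hMw : M w = M u - x := by
    have : M (R x) = x := by
      rw [← ContinuousLinearMap.mul_apply, hMR, ContinuousLinearMap.one_apply]
    rw [hw, map_sub, this]
  have hRMu : R (M u) = u := by
    rw [← ContinuousLinearMap.mul_apply, hRM, ContinuousLinearMap.one_apply]
  have e1 : ⟪M u, R x⟫_ℂ = ⟪A u, v⟫_ℂ := by
    rw [inner_selfadj_swap hRsa (M u) x, hRMu, hx,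
      ContinuousLinearMap.adjoint_inner_right]
  have e3 : ⟪x, R x⟫_ℂ = ⟪(A * R * A') v, v⟫_ℂ := by
    rw [inner_selfadj_swap hRsa x x]
    conv_lhs => rw [hx]
    rw [ContinuousLinearMap.adjoint_inner_right]
    congr 1
  have e2 : (⟪x, u⟫_ℂ).re = (⟪A u, v⟫_ℂ).re := by
    rw [← inner_conj_symm x u, Complex.conj_re, hx,
      ContinuousLinearMap.adjoint_inner_right]
  have hsplit : ⟪M w, w⟫_ℂ
      = ⟪M u, u⟫_ℂ - ⟪A u, v⟫_ℂ - ⟪x, u⟫_ℂ + ⟪(A * R * A') v, v⟫_ℂ := by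
    rw [hMw]
    conv_lhs => rw [hw]
    rw [inner_sub_left, inner_sub_right, inner_sub_right, e1, e3]
    ring
  have expand : (⟪M w, w⟫_ℂ).re
      = (⟪M u, u⟫_ℂ).re - 2 * (⟪A u, v⟫_ℂ).re + (⟪(A * R * A') v, v⟫_ℂ).re := by
    rw [hsplit]
    simp only [Complex.add_re, Complex.sub_re, e2]
    ring
  have hMu : (⟪M u, u⟫_ℂ).re = (⟪P u, u⟫_ℂ).re + ε * ‖u‖ ^ 2 := by
    have hcu : c u = (ε : ℂ) • u := by
      rw [hc, Algebra.algebraMap_eq_smul_one, ContinuousLinearMap.smul_apply,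
        ContinuousLinearMap.one_apply, RCLike.real_smul_eq_coe_smul (K := ℂ)]
      rfl
    have hεu : (⟪(ε : ℂ) • u, u⟫_ℂ).re = ε * ‖u‖ ^ 2 := by
      rw [inner_smul_left, Complex.conj_ofReal, Complex.mul_re, Complex.ofReal_re,
        Complex.ofReal_im]
      have h1 : (⟪u, u⟫_ℂ).re = ‖u‖ ^ 2 := by
        simpa using inner_self_eq_norm_sq (𝕜 := ℂ) (x := u)
      rw [h1]; ring
    rw [hM, ContinuousLinearMap.add_apply, inner_add_left, Complex.add_re, hcu, hεu]
  have hpos : 0 ≤ (⟪M w, w⟫_ℂ).re := inner_re_nonneg hMnn w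
  have hmono : (⟪(A * R * A') v, v⟫_ℂ).re ≤ (⟪Q v, v⟫_ℂ).re := inner_re_mono hkey v
  rw [expand, hMu] at hpos
  linarith

lemma keyRe' (A : H →L[ℂ] H) (u v : H) :
    2 * (⟪A u, v⟫_ℂ).re ≤ (⟪oabs A u, u⟫_ℂ).re
      + (⟪oabs (ContinuousLinearMap.adjoint A) v, v⟫_ℂ).re := by
  refine le_of_forall_pos_le_add fun ε hε => ?_
  have h := keyRe A u v (ε := ε / (‖u‖ ^ 2 + 1)) (by positivity)
  have hle : ε / (‖u‖ ^ 2 + 1) * ‖u‖ ^ 2 ≤ ε := by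
    rw [div_mul_eq_mul_div, div_le_iff₀ (by positivity)]
    nlinarith [sq_nonneg ‖u‖]
  linarith

lemma keyNorm (A : H →L[ℂ] H) (u v : H) :
    2 * ‖⟪A u, v⟫_ℂ‖ ≤ (⟪oabs A u, u⟫_ℂ).re
      + (⟪oabs (ContinuousLinearMap.adjoint A) v, v⟫_ℂ).re := by
  set z := ⟪A u, v⟫_ℂ with hz
  by_cases h0 : z = 0
  · rw [h0, norm_zero, mul_zero]
    exact add_nonneg (inner_re_nonneg (oabs_nonneg A) u)
      (inner_re_nonneg (oabs_nonneg _) v)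
  · set cph : ℂ := ‖z‖ / z with hcph
    have hcz : cph * z = (‖z‖ : ℂ) := by
      rw [hcph]; field_simp
    have hcc : (starRingEnd ℂ) cph * cph = 1 := by
      rw [Complex.conj_mul']
      have hn : ‖cph‖ = 1 := by
        rw [hcph, norm_div, Complex.norm_real, norm_norm,
          div_self (norm_ne_zero_iff.mpr h0)]
      rw [hn]
      norm_num
    have h := keyRe' A u (cph • v)
    have e1 : ⟪A u, cph • v⟫_ℂ = (‖z‖ : ℂ) := by
      rw [inner_smul_right, ← hz, hcz]
    have e2 : ⟪oabs (ContinuousLinearMap.adjoint A) (cph • v), cph • v⟫_ℂ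
        = ⟪oabs (ContinuousLinearMap.adjoint A) v, v⟫_ℂ := by
      rw [map_smul, inner_smul_left, inner_smul_right, ← mul_assoc, hcc, one_mul]
    rw [e1, e2] at h
    simpa using h

end BerAux

theorem berezin_pointwise_AB_plus_BstarA (A B : H →L[ℂ] H) (k : H) (hk : ‖k‖ = 1) :
    ‖⟪(A * B + ContinuousLinearMap.adjoint B * A) k, k⟫_ℂ‖ ≤
      (1 / 2) * (⟪(oabs A + oabs (ContinuousLinearMap.adjoint A)) k, k⟫_ℂ).re +
      (1 / 2) *
        (⟪(ContinuousLinearMap.adjoint B *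
            (oabs A + oabs (ContinuousLinearMap.adjoint A)) * B) k, k⟫_ℂ).re := by
  set P := oabs A with hP
  set Q := oabs (ContinuousLinearMap.adjoint A) with hQ
  have h1 : 2 * ‖⟪A (B k), k⟫_ℂ‖ ≤ (⟪P (B k), B k⟫_ℂ).re + (⟪Q k, k⟫_ℂ).re :=
    BerAux.keyNorm A (B k) k
  have h2 : 2 * ‖⟪A k, B k⟫_ℂ‖ ≤ (⟪P k, k⟫_ℂ).re + (⟪Q (B k), B k⟫_ℂ).re :=
    BerAux.keyNorm A k (B k)
  have hsum : ⟪(A * B + ContinuousLinearMap.adjoint B * A) k, k⟫_ℂ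
      = ⟪A (B k), k⟫_ℂ + ⟪A k, B k⟫_ℂ := by
    rw [ContinuousLinearMap.add_apply, inner_add_left]
    congr 1
    rw [ContinuousLinearMap.mul_apply, ContinuousLinearMap.adjoint_inner_left]
  have hrhs1 : (⟪(P + Q) k, k⟫_ℂ).re = (⟪P k, k⟫_ℂ).re + (⟪Q k, k⟫_ℂ).re := by
    rw [ContinuousLinearMap.add_apply, inner_add_left, Complex.add_re]
  have hrhs2 : (⟪(ContinuousLinearMap.adjoint B * (P + Q) * B) k, k⟫_ℂ).re
      = (⟪P (B k), B k⟫_ℂ).re + (⟪Q (B k), B k⟫_ℂ).re := by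
    rw [ContinuousLinearMap.mul_apply, ContinuousLinearMap.mul_apply,
      ContinuousLinearMap.adjoint_inner_left, ContinuousLinearMap.add_apply,
      inner_add_left, Complex.add_re]
  rw [hsum, hrhs1, hrhs2]
  calc ‖⟪A (B k), k⟫_ℂ + ⟪A k, B k⟫_ℂ‖ ≤ ‖⟪A (B k), k⟫_ℂ‖ + ‖⟪A k, B k⟫_ℂ‖ :=
        norm_add_le _ _
    _ ≤ _ := by linarith
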